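/- Let q be a power of a prime p, let n ≥ 2 be an integer, and let s be a positive integer with s < n - 1. Then there exist monic q-polynomials g(x) and g_s(x) in F_{q^n}[x] such that g_s(g(x)) = T_n(x), deg(g_s(x)) = q^s, and g_s(x) splits into linear factors over F_{q^n}. -/

import Mathlib

open Polynomial

/-- A `q`-polynomial (linearized polynomial): every monomial exponent is a power of `q`. -/
def IsqPoly (q : ℕ) {F : Type*} [Semiring F] (f : Polynomial F) : Prop :=
  ∀ i ∈ f.support, ∃ k : ℕ, i = q ^ k

section Helpers

variable {F : Type*} [Field F] {q : ℕ}

lemma IsqPoly.sub {f g : F[X]} (hf : IsqPoly q f) (hg : IsqPoly q g) :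
    IsqPoly q (f - g) := by
  intro i hi
  rw [Polynomial.mem_support_iff, coeff_sub] at hi
  by_cases h : f.coeff i = 0
  · exact hg i (Polynomial.mem_support_iff.mpr (by intro h'; apply hi; rw [h, h']; ring))
  · exact hf i (Polynomial.mem_support_iff.mpr h)

lemma IsqPoly.C_mul {f : F[X]} (c : F) (hf : IsqPoly q f) : IsqPoly q (C c * f) := by
  intro i hi
  rw [Polynomial.mem_support_iff, coeff_C_mul] at hi
  exact hf i (Polynomial.mem_support_iff.mpr (fun h => hi (by rw [h, mul_zero])))

lemma IsqPoly.pow_q (p e : ℕ) [hp : Fact p.Prime] [CharP F p] {f : F[X]}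
    (hf : IsqPoly (p ^ e) f) : IsqPoly (p ^ e) (f ^ p ^ e) := by
  intro i hi
  rw [← Polynomial.map_iterateFrobenius_expand (p := p), Polynomial.mem_support_iff, Polynomial.coeff_map] at hi
  have h1 : (Polynomial.expand F (p ^ e) f).coeff i ≠ 0 := by
    intro h; apply hi; rw [h, map_zero]
  rw [Polynomial.coeff_expand (pow_pos hp.out.pos e)] at h1
  by_cases hd : p ^ e ∣ i
  · rw [if_pos hd] at h1
    obtain ⟨k, hk⟩ := hf _ (Polynomial.mem_support_iff.mpr h1)
    exact ⟨k + 1, by rw [← Nat.div_mul_cancel hd, hk, pow_succ, mul_comm]⟩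
  · rw [if_neg hd] at h1; exact absurd rfl h1

lemma eval_add_of_isqPoly (p e : ℕ) [Fact p.Prime] [CharP F p] {f : F[X]}
    (hf : IsqPoly (p ^ e) f) (x y : F) : f.eval (x + y) = f.eval x + f.eval y := by
  rw [eval_eq_sum, eval_eq_sum, eval_eq_sum, Polynomial.sum_def, Polynomial.sum_def,
    Polynomial.sum_def, ← Finset.sum_add_distrib]
  refine Finset.sum_congr rfl fun i hi => ?_
  obtain ⟨k, rfl⟩ := hf i hi
  rw [← pow_mul, add_pow_char_pow, mul_add]

lemma eval_sub_of_isqPoly (p e : ℕ) [Fact p.Prime] [CharP F p] {f : F[X]}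
    (hf : IsqPoly (p ^ e) f) (x y : F) : f.eval (x - y) = f.eval x - f.eval y := by
  rw [eval_eq_sum, eval_eq_sum, eval_eq_sum, Polynomial.sum_def, Polynomial.sum_def,
    Polynomial.sum_def, ← Finset.sum_sub_distrib]
  refine Finset.sum_congr rfl fun i hi => ?_
  obtain ⟨k, rfl⟩ := hf i hi
  rw [← pow_mul, sub_pow_char_pow, mul_sub]

lemma pow_q_pow_fixed {l : F} (hl : l ^ q = l) : ∀ k : ℕ, l ^ q ^ k = l := by
  intro k
  induction k with
  | zero => simp
  | succ k ih => rw [pow_succ, pow_mul, ih, hl]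

lemma eval_smul_of_isqPoly {f : F[X]} (hf : IsqPoly q f) {l : F} (hl : l ^ q = l)
    (x : F) : f.eval (l * x) = l * f.eval x := by
  rw [eval_eq_sum, eval_eq_sum, Polynomial.sum_def, Polynomial.sum_def, Finset.mul_sum]
  refine Finset.sum_congr rfl fun i hi => ?_
  obtain ⟨k, rfl⟩ := hf i hi
  rw [mul_pow, pow_q_pow_fixed hl]
  ring

lemma monic_qstep {f : F[X]} (hf : f.Monic) (hq : 2 ≤ q) (hd : f.natDegree ≠ 0) (c : F) :
    (f ^ q - C c * f).Monic ∧ (f ^ q - C c * f).natDegree = q * f.natDegree := by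
  have hdlt : (C c * f).natDegree < (f ^ q).natDegree := by
    rw [natDegree_pow]
    calc (C c * f).natDegree ≤ f.natDegree := natDegree_C_mul_le c f
      _ < q * f.natDegree := by nlinarith [Nat.pos_of_ne_zero hd]
  have hdeg : (C c * f).degree < (f ^ q).degree := degree_lt_degree hdlt
  constructor
  · rw [sub_eq_add_neg]
    exact (hf.pow q).add_of_left (by rwa [degree_neg])
  · rw [natDegree_sub_eq_left_of_natDegree_lt hdlt, natDegree_pow]

end Helpers

lemma main_aux (p e n s : ℕ) [hpf : Fact p.Prime] (he : 0 < e)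
    (hn : 2 ≤ n) (hs : 0 < s) (hsn : s < n - 1)
    (F : Type*) [Field F] [Fintype F] [CharP F p] (hF : Fintype.card F = (p ^ e) ^ n) :
    ∃ g gs : Polynomial F,
      g.Monic ∧ gs.Monic ∧ IsqPoly (p ^ e) g ∧ IsqPoly (p ^ e) gs ∧
      gs.comp g = ∑ i ∈ Finset.range n, X ^ (p ^ e) ^ i ∧
      gs.natDegree = (p ^ e) ^ s ∧
      Splits (gs.map (RingHom.id F)) := by
  classical
  have hp := hpf.out
  set q := p ^ e with hqdef
  have hq1 : 1 < q := Nat.one_lt_pow he.ne' hp.one_lt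
  have hq2 : 2 ≤ q := hq1
  have hq0 : 0 < q := by omega
  set m := n - 1 - s with hmdef
  have hm1 : 1 ≤ m := by omega
  have hms : m + s = n - 1 := by omega
  -- basic Frobenius facts
  have hq_add : ∀ (x y : F) (k : ℕ), (x + y) ^ q ^ k = x ^ q ^ k + y ^ q ^ k := by
    intro x y k
    have h : q ^ k = p ^ (e * k) := by rw [hqdef, ← pow_mul]
    rw [h, add_pow_char_pow]
  have hq_sub : ∀ (x y : F) (k : ℕ), (x - y) ^ q ^ k = x ^ q ^ k - y ^ q ^ k := by
    intro x y k
    have h : q ^ k = p ^ (e * k) := by rw [hqdef, ← pow_mul]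
    rw [h, sub_pow_char_pow]
  have hpowcard : ∀ x : F, x ^ q ^ n = x := by
    intro x; rw [← hF]; exact FiniteField.pow_card x
  -- the trace function and polynomial
  set Tfun : F → F := fun x => ∑ i ∈ Finset.range n, x ^ q ^ i with hTfun
  set Tn : F[X] := ∑ i ∈ Finset.range n, (X : F[X]) ^ q ^ i with hTn
  have hTeval : ∀ x : F, Tn.eval x = Tfun x := by
    intro x; rw [hTn, hTfun]; simp [eval_finset_sum]
  have hT_add : ∀ x y : F, Tfun (x + y) = Tfun x + Tfun y := by
    intro x y
    rw [hTfun]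
    rw [← Finset.sum_add_distrib]
    exact Finset.sum_congr rfl fun i _ => hq_add x y i
  have hT_smul : ∀ (l : F), l ^ q = l → ∀ x, Tfun (l * x) = l * Tfun x := by
    intro l hl x
    rw [hTfun]
    rw [Finset.mul_sum]
    exact Finset.sum_congr rfl fun i _ => by rw [mul_pow, pow_q_pow_fixed hl]
  have hT0 : Tfun 0 = 0 := by
    rw [hTfun]
    exact Finset.sum_eq_zero fun i _ => zero_pow (pow_pos hq0 i).ne'
  have hT_mem : ∀ x : F, (Tfun x) ^ q = Tfun x := by
    intro x
    have h1 : (Tfun x) ^ q = ∑ i ∈ Finset.range n, x ^ q ^ (i + 1) := by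
      rw [hTfun]
      calc (∑ i ∈ Finset.range n, x ^ q ^ i) ^ q
          = ∑ i ∈ Finset.range n, (x ^ q ^ i) ^ p ^ e := by
            rw [hqdef, sum_pow_char_pow]
        _ = ∑ i ∈ Finset.range n, x ^ q ^ (i + 1) :=
            Finset.sum_congr rfl fun i _ => by rw [← hqdef, ← pow_mul, ← pow_succ]
    have h2 : ∑ i ∈ Finset.range (n + 1), x ^ q ^ i
        = (∑ i ∈ Finset.range n, x ^ q ^ (i + 1)) + x ^ q ^ 0 :=
      Finset.sum_range_succ' _ n
    have h3 : ∑ i ∈ Finset.range (n + 1), x ^ q ^ i = Tfun x + x ^ q ^ n :=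
      Finset.sum_range_succ _ n
    rw [h3, hpowcard, pow_zero, pow_one] at h2
    rw [h1]
    exact (add_right_cancel h2).symm
  -- root sets
  set RS : F[X] → Finset F := fun f => Finset.univ.filter fun x => f.eval x = 0 with hRS
  have hRS_mem : ∀ (f : F[X]) (x : F), x ∈ RS f ↔ f.eval x = 0 := by
    intro f x; rw [hRS]; simp
  have hRS_le : ∀ f : F[X], f ≠ 0 → (RS f).card ≤ f.natDegree := by
    intro f hf
    refine le_trans (Finset.card_le_card (fun x hx => ?_))
      (le_trans (Multiset.toFinset_card_le _) (card_roots' f))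
    rw [Multiset.mem_toFinset, mem_roots']
    exact ⟨hf, (hRS_mem f x).mp hx⟩
  set Λ : Finset F := Finset.univ.filter (fun x => x ^ q = x) with hΛ
  have hΛ_mem : ∀ x : F, x ∈ Λ ↔ x ^ q = x := by intro x; rw [hΛ]; simp
  set K : Finset F := Finset.univ.filter (fun x => Tfun x = 0) with hK
  have hK_mem : ∀ x : F, x ∈ K ↔ Tfun x = 0 := by intro x; rw [hK]; simp
  -- degree facts for X^q - X and Tn
  have hXq : ((X : F[X]) ^ q - C 1 * X).Monic ∧
      ((X : F[X]) ^ q - C 1 * X).natDegree = q * (X : F[X]).natDegree :=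
    monic_qstep monic_X hq2 (by rw [natDegree_X]; omega) 1
  have hΛ_le : Λ.card ≤ q := by
    have h0 : ((X : F[X]) ^ q - C 1 * X) ≠ 0 := hXq.1.ne_zero
    have := hRS_le _ h0
    rw [hXq.2, natDegree_X, mul_one] at this
    refine le_trans (Finset.card_le_card fun x hx => ?_) this
    rw [hRS_mem]
    rw [hΛ_mem] at hx
    simp [hx]
  have hTn_split : Tn = (∑ i ∈ Finset.range (n - 1), (X : F[X]) ^ q ^ i) + X ^ q ^ (n - 1) := by
    rw [hTn]
    have h : n = (n - 1) + 1 := by omega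
    conv_lhs => rw [h, Finset.sum_range_succ]
  have hSdeg : (∑ i ∈ Finset.range (n - 1), (X : F[X]) ^ q ^ i).degree
      < ((X : F[X]) ^ q ^ (n - 1)).degree := by
    rw [degree_X_pow]
    refine lt_of_le_of_lt (degree_sum_le _ _) ?_
    rw [Finset.sup_lt_iff (by exact WithBot.bot_lt_coe _)]
    intro i hi
    rw [degree_X_pow, Nat.cast_lt]
    exact Nat.pow_lt_pow_right hq1 (Finset.mem_range.mp hi)
  have hTn_monic : Tn.Monic := by
    rw [hTn_split]
    exact (monic_X_pow _).add_of_right hSdeg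
  have hTn_deg : Tn.natDegree = q ^ (n - 1) := by
    have : Tn.degree = ((q : ℕ) ^ (n - 1) : ℕ) := by
      rw [hTn_split, degree_add_eq_right_of_degree_lt hSdeg, degree_X_pow]
    exact natDegree_eq_of_degree_eq_some this
  have hK_le : K.card ≤ q ^ (n - 1) := by
    have := hRS_le Tn hTn_monic.ne_zero
    rw [hTn_deg] at this
    refine le_trans (Finset.card_le_card fun x hx => ?_) this
    rw [hRS_mem, hTeval]
    exact (hK_mem x).mp hx
  -- counting: card F ≤ |K| * |Λ|
  have hcount : q ^ n ≤ K.card * Λ.card := by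
    rw [← hF, ← Finset.card_univ]
    refine Finset.card_le_mul_card_image_of_maps_to (f := Tfun)
      (fun a _ => (hΛ_mem _).mpr (hT_mem a)) K.card (fun b _ => ?_)
    by_cases hfib : (Finset.univ.filter fun a => Tfun a = b).Nonempty
    · obtain ⟨a₀, ha₀⟩ := hfib
      rw [Finset.mem_filter] at ha₀
      refine Finset.card_le_card_of_injOn (fun x => x - a₀) (fun x hx => ?_) ?_
      · rw [Finset.mem_coe, Finset.mem_filter] at hx; rw [Finset.mem_coe]
        rw [hK_mem]
        have : Tfun (x - a₀) = Tfun x - Tfun a₀ := by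
          have h := hT_add (x - a₀) a₀
          rw [sub_add_cancel] at h
          rw [h]; ring
        rw [this, hx.2, ha₀.2, sub_self]
      · intro x _ y _ hxy
        exact sub_left_injective hxy
    · rw [Finset.not_nonempty_iff_eq_empty] at hfib
      simp only [hfib, Finset.card_empty]
      exact Nat.zero_le _
  have hΛcard : Λ.card = q := by
    refine le_antisymm hΛ_le ?_
    have h1 : K.card * Λ.card ≤ q ^ (n - 1) * Λ.card :=
      Nat.mul_le_mul_right _ hK_le
    have h2 : q ^ (n - 1) * q ≤ q ^ (n - 1) * Λ.card := by
      rw [← pow_succ]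
      have : (n - 1) + 1 = n := by omega
      rw [this]
      omega
    exact Nat.le_of_mul_le_mul_left h2 (by positivity)
  have hKcard : K.card = q ^ (n - 1) := by
    refine le_antisymm hK_le ?_
    have h1 : K.card * Λ.card ≤ K.card * q := Nat.mul_le_mul_left _ hΛ_le
    have h2 : q ^ (n - 1) * q ≤ K.card * q := by
      rw [← pow_succ]
      have : (n - 1) + 1 = n := by omega
      rw [this]
      omega
    exact Nat.le_of_mul_le_mul_right h2 hq0
  -- the key step lemma
  have step : ∀ (i : ℕ) (G : F[X]), i < n - 1 → G.Monic → IsqPoly q G →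
      G.natDegree = q ^ i → RS G ⊆ K → (RS G).card = q ^ i →
      ∃ c : F, (G ^ q - C c * G).Monic ∧ IsqPoly q (G ^ q - C c * G) ∧
        (G ^ q - C c * G).natDegree = q ^ (i + 1) ∧ RS (G ^ q - C c * G) ⊆ K ∧
        (RS (G ^ q - C c * G)).card = q ^ (i + 1) := by
    intro i G hi hGm hGq hGd hGsub hGcard
    have hlt : (RS G).card < K.card := by
      rw [hGcard, hKcard]
      exact Nat.pow_lt_pow_right hq1 (by omega)
    have hw : ∃ w, w ∈ K ∧ w ∉ RS G := by
      by_contra h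
      push_neg at h
      exact absurd (Finset.card_le_card fun x hx => h x hx) (by omega)
    obtain ⟨w, hwK, hwR⟩ := hw
    set b := G.eval w with hb
    set c := b ^ (q - 1) with hc
    set G' := G ^ q - C c * G with hG'
    obtain ⟨hm', hdeg'⟩ := monic_qstep hGm hq2 (by rw [hGd]; positivity) c
    have hdeg2 : G'.natDegree = q ^ (i + 1) := by
      rw [hG', hdeg', hGd, ← pow_succ']
    have hqpoly : IsqPoly q G' := (IsqPoly.pow_q p e hGq).sub (hGq.C_mul c)
    have hev : ∀ x : F, G'.eval x = (G.eval x) ^ q - c * G.eval x := by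
      intro x; rw [hG']; simp
    have hcb : c * b = b ^ q := by
      rw [hc, ← pow_succ]
      congr 1
      omega
    -- the injection from Λ ×ˢ RS G
    have himg_mem : ∀ z : F × F, z ∈ Λ ×ˢ RS G → (z.2 + z.1 * w) ∈ RS G' := by
      rintro ⟨l, v⟩ hz
      rw [Finset.mem_product] at hz
      obtain ⟨hl, hv⟩ := hz
      show (v + l * w) ∈ RS G'
      rw [hΛ_mem] at hl
      rw [hRS_mem] at hv
      have h1 : G.eval (v + l * w) = l * b := by
        rw [eval_add_of_isqPoly p e hGq, eval_smul_of_isqPoly hGq hl, hv, ← hb, zero_add]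
      rw [hRS_mem, hev, h1, mul_pow, hl, ← hcb]
      ring
    have hinj : Set.InjOn (fun z : F × F => z.2 + z.1 * w) (Λ ×ˢ RS G : Finset (F × F)) := by
      rintro ⟨l1, v1⟩ h1 ⟨l2, v2⟩ h2 heq
      simp only [Finset.coe_product, Set.mem_prod, Finset.mem_coe] at h1 h2
      obtain ⟨hl1, hv1⟩ := h1
      obtain ⟨hl2, hv2⟩ := h2
      rw [hΛ_mem] at hl1 hl2
      rw [hRS_mem] at hv1 hv2
      simp only at heq
      by_cases hl : l1 = l2
      · subst hl
        exact Prod.ext rfl (add_right_cancel heq)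
      · exfalso
        have hμ : (l1 - l2) ^ q = l1 - l2 := by
          have := hq_sub l1 l2 1
          rwa [pow_one, hl1, hl2] at this
        have hμne : l1 - l2 ≠ 0 := sub_ne_zero.mpr hl
        have h5 : (l1 - l2) * w = v2 - v1 := by linear_combination heq
        have hweq : w = (l1 - l2)⁻¹ * (v2 - v1) := by
          rw [← h5, inv_mul_cancel_left₀ hμne]
        have hinv : ((l1 - l2)⁻¹) ^ q = (l1 - l2)⁻¹ := by
          rw [inv_pow, hμ]
        have : G.eval w = 0 := by
          rw [hweq, eval_smul_of_isqPoly hGq hinv, eval_sub_of_isqPoly p e hGq, hv1, hv2,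
            sub_self, mul_zero]
        exact hwR ((hRS_mem G w).mpr this)
    have hcard_img : ((Λ ×ˢ RS G).image (fun z : F × F => z.2 + z.1 * w)).card = q ^ (i + 1) := by
      rw [Finset.card_image_of_injOn hinj, Finset.card_product, hΛcard, hGcard, ← pow_succ']
    have hsub' : (Λ ×ˢ RS G).image (fun z : F × F => z.2 + z.1 * w) ⊆ RS G' :=
      Finset.image_subset_iff.mpr himg_mem
    have hRG' : (Λ ×ˢ RS G).image (fun z : F × F => z.2 + z.1 * w) = RS G' := by
      refine Finset.eq_of_subset_of_card_le hsub' ?_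
      rw [hcard_img, ← hdeg2]
      exact hRS_le G' hm'.ne_zero
    refine ⟨c, hm', hqpoly, hdeg2, ?_, by rw [← hRG', hcard_img]⟩
    rw [← hRG']
    intro x hx
    rw [Finset.mem_image] at hx
    obtain ⟨⟨l, v⟩, hz, rfl⟩ := hx
    rw [Finset.mem_product] at hz
    obtain ⟨hl, hv⟩ := hz
    rw [hΛ_mem] at hl
    rw [hK_mem]
    have hvK : Tfun v = 0 := (hK_mem v).mp (hGsub hv)
    have hwT : Tfun w = 0 := (hK_mem w).mp hwK
    rw [hT_add, hvK, hT_smul l hl, hwT, mul_zero, add_zero]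
    -- first induction: build g of degree q^m
  have hbase : (X : F[X]).Monic ∧ IsqPoly q (X : F[X]) ∧ (X : F[X]).natDegree = q ^ 0 ∧
      RS X ⊆ K ∧ (RS (X : F[X])).card = q ^ 0 := by
    have hRX : RS (X : F[X]) = {0} := by
      ext x
      rw [hRS_mem, Finset.mem_singleton, eval_X]
    refine ⟨monic_X, ?_, by rw [natDegree_X, pow_zero], ?_, by rw [hRX, pow_zero]; rfl⟩
    · intro i hi
      rw [support_X, Finset.mem_singleton] at hi
      exact ⟨0, by rw [hi, pow_zero]⟩
    · rw [hRX]
      intro x hx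
      rw [Finset.mem_singleton] at hx
      subst hx
      exact (hK_mem 0).mpr hT0
  have A : ∀ i, i ≤ n - 1 → ∃ g : F[X], g.Monic ∧ IsqPoly q g ∧ g.natDegree = q ^ i ∧
      RS g ⊆ K ∧ (RS g).card = q ^ i := by
    intro i
    induction i with
    | zero => exact fun _ => ⟨X, hbase⟩
    | succ i ih =>
      intro hle
      obtain ⟨g, h1, h2, h3, h4, h5⟩ := ih (by omega)
      obtain ⟨c, hc1, hc2, hc3, hc4, hc5⟩ := step i g (by omega) h1 h2 h3 h4 h5
      exact ⟨g ^ q - C c * g, hc1, hc2, hc3, hc4, hc5⟩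
  obtain ⟨g, hgm, hgq, hgd, hgsub, hgcard⟩ := A m (by omega)
  -- second induction: build gs with gs.comp g reaching degree q^(n-1)
  have B : ∀ j, j ≤ s → ∃ h : F[X], h.Monic ∧ IsqPoly q h ∧ h.natDegree = q ^ j ∧
      (h.comp g).Monic ∧ IsqPoly q (h.comp g) ∧ (h.comp g).natDegree = q ^ (m + j) ∧
      RS (h.comp g) ⊆ K ∧ (RS (h.comp g)).card = q ^ (m + j) := by
    intro j
    induction j with
    | zero =>
      intro _
      refine ⟨X, monic_X, hbase.2.1, by rw [natDegree_X, pow_zero], ?_⟩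
      rw [X_comp, Nat.add_zero]
      exact ⟨hgm, hgq, hgd, hgsub, hgcard⟩
    | succ j ih =>
      intro hle
      obtain ⟨h, hh1, hh2, hh3, hG1, hG2, hG3, hG4, hG5⟩ := ih (by omega)
      obtain ⟨c, hc1, hc2, hc3, hc4, hc5⟩ :=
        step (m + j) (h.comp g) (by omega) hG1 hG2 hG3 hG4 hG5
      have hcomp : (h ^ q - C c * h).comp g = (h.comp g) ^ q - C c * (h.comp g) := by
        rw [sub_comp, pow_comp, mul_comp, C_comp]
      obtain ⟨hh1', hh3'⟩ := monic_qstep hh1 hq2 (by rw [hh3]; positivity) c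
      have hidx : m + (j + 1) = (m + j) + 1 := by omega
      refine ⟨h ^ q - C c * h, hh1', (IsqPoly.pow_q p e hh2).sub (hh2.C_mul c),
        by rw [hh3', hh3, ← pow_succ'], ?_, ?_, ?_, ?_, ?_⟩ <;>
        rw [hcomp] <;> first
          | exact hc1
          | exact hc2
          | (rw [hidx]; exact hc3)
          | exact hc4
          | (rw [hidx]; exact hc5)
  obtain ⟨gs, hsm, hsq, hsd, hGm', hGq', hGd', hGsub', hGcard'⟩ := B s le_rfl
  rw [hms] at hGd' hGcard'
  -- RS (gs.comp g) = K
  have hRK : RS (gs.comp g) = K :=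
    Finset.eq_of_subset_of_card_le hGsub' (by rw [hGcard', hKcard])
  -- gs.comp g = Tn
  have hTG : gs.comp g = Tn := by
    by_contra hne
    have hD : gs.comp g - Tn ≠ 0 := sub_ne_zero.mpr hne
    have hdd : (gs.comp g - Tn).degree < (gs.comp g).degree :=
      degree_sub_lt
        (by rw [degree_eq_natDegree hGm'.ne_zero, degree_eq_natDegree hTn_monic.ne_zero,
          hGd', hTn_deg]) hGm'.ne_zero (by rw [hGm'.leadingCoeff, hTn_monic.leadingCoeff])
    have hdd' : (gs.comp g - Tn).natDegree < q ^ (n - 1) := by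
      have h1 : (gs.comp g).degree = ((q : ℕ) ^ (n - 1) : ℕ) := by
        rw [degree_eq_natDegree hGm'.ne_zero, hGd']
      rw [h1] at hdd
      exact (natDegree_lt_iff_degree_lt hD).mpr hdd
    have hKsub : K ⊆ RS (gs.comp g - Tn) := by
      intro x hx
      rw [hRS_mem, eval_sub, hTeval]
      have h1 : (gs.comp g).eval x = 0 := (hRS_mem _ x).mp (hRK ▸ hx)
      have h2 : Tfun x = 0 := (hK_mem x).mp hx
      rw [h1, h2, sub_self]
    have := le_trans (Finset.card_le_card hKsub) (hRS_le _ hD)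
    omega
  -- splits
  have himg2 : K.image (fun x => g.eval x) ⊆ (RS gs) := by
    intro y hy
    rw [Finset.mem_image] at hy
    obtain ⟨x, hx, rfl⟩ := hy
    rw [hRS_mem, ← eval_comp]
    exact (hRS_mem _ x).mp (hRK ▸ hx)
  have hfiber : K.card ≤ q ^ m * (K.image (fun x => g.eval x)).card := by
    refine Finset.card_le_mul_card_image (s := K) (f := fun x => g.eval x) _ (fun bb _ => ?_)
    by_cases hfib : (K.filter fun a => g.eval a = bb).Nonempty
    · obtain ⟨a₀, ha₀⟩ := hfib
      rw [Finset.mem_filter] at ha₀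
      have : (K.filter fun a => g.eval a = bb).card ≤ (RS g).card := by
        refine Finset.card_le_card_of_injOn (fun x => x - a₀) (fun x hx => ?_) ?_
        · rw [Finset.mem_coe, Finset.mem_filter] at hx; rw [Finset.mem_coe]
          rw [hRS_mem, eval_sub_of_isqPoly p e hgq, hx.2, ha₀.2, sub_self]
        · intro x _ y _ hxy
          exact sub_left_injective hxy
      rw [hgcard] at this
      exact this
    · rw [Finset.not_nonempty_iff_eq_empty] at hfib
      rw [hfib, Finset.card_empty]
      exact Nat.zero_le _
  have himg2card : q ^ s ≤ (K.image (fun x => g.eval x)).card := by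
    have h1 : q ^ m * q ^ s ≤ q ^ m * (K.image (fun x => g.eval x)).card := by
      rw [← pow_add, hms, ← hKcard]
      exact hfiber
    exact Nat.le_of_mul_le_mul_left h1 (by positivity)
  have hroots : Multiset.card gs.roots = gs.natDegree := by
    refine le_antisymm (card_roots' gs) ?_
    rw [hsd]
    refine le_trans himg2card (le_trans ?_ (Multiset.toFinset_card_le _))
    refine Finset.card_le_card ?_
    intro y hy
    rw [Multiset.mem_toFinset, mem_roots']
    exact ⟨hsm.ne_zero, (hRS_mem gs y).mp (himg2 hy)⟩
  have hsplits : Splits (gs.map (RingHom.id F)) := by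
    rw [Polynomial.map_id]; exact splits_iff_card_roots.mpr hroots
  exact ⟨g, gs, hgm, hsm, hgq, hsq, by rw [hTG, hTn], hsd, hsplits⟩

/-- Lemma 2.8 (Lemma `quebra`): for `0 < s < n - 1` there exist monic `q`-polynomials
`g` and `gs` over `F_{q^n}` with `gs.comp g = T_n`, `deg gs = q^s`, and `gs` split. -/
theorem exists_monic_qpoly_factorization_of_Tn
    (p q e n s : ℕ) (hp : p.Prime) (he : 0 < e) (hq : q = p ^ e)
    (hn : 2 ≤ n) (hs : 0 < s) (hsn : s < n - 1)
    (F : Type*) [Field F] [Fintype F] (hF : Fintype.card F = q ^ n) :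
    ∃ g gs : Polynomial F,
      g.Monic ∧ gs.Monic ∧ IsqPoly q g ∧ IsqPoly q gs ∧
      gs.comp g = ∑ i ∈ Finset.range n, X ^ q ^ i ∧
      gs.natDegree = q ^ s ∧
      Splits (gs.map (RingHom.id F)) := by
  haveI hpf : Fact p.Prime := ⟨hp⟩
  haveI := ringChar.charP F
  obtain ⟨k, hrp, hcard⟩ := FiniteField.card F (ringChar F)
  have hdvd : ringChar F ∣ p ^ (e * n) := by
    have h1 : Fintype.card F = p ^ (e * n) := by rw [hF, hq, ← pow_mul]
    rw [← h1, hcard]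
    exact dvd_pow_self _ k.ne_zero
  have hrp_eq : ringChar F = p :=
    (Nat.prime_dvd_prime_iff_eq hrp hp).mp (hrp.dvd_of_dvd_pow hdvd)
  haveI : CharP F p := hrp_eq ▸ ringChar.charP F
  subst hq
  exact main_aux p e n s he hn hs hsn F hF
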